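/- Robustness guarantee for randomized smoothing (Cohen et al., re-proved via Lipschitz property): Let σ > 0 and let f_A, f_B : ℝⁿ → [0,1] be measurable with σ-smoothed transforms f̂_A, f̂_B taking values in (0,1). Fix x ∈ ℝⁿ, and set p_A = f̂_A(x), p_B = f̂_B(x) with p_B ≤ p_A. If δ ∈ ℝⁿ satisfies ‖δ‖₂ < (σ/2)(Φ⁻¹(p_A) - Φ⁻¹(p_B)), then f̂_A(x + δ) > f̂_B(x + δ). Equivalently, any δ with f̂_A(x + δ) ≤ f̂_B(x + δ) satisfies ‖δ‖₂ ≥ (σ/2)(Φ⁻¹(p_A) - Φ⁻¹(p_B)). -/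

import Mathlib

open MeasureTheory Real

/-- The `n`-dimensional isotropic Gaussian measure `N(0, σ² Iₙ)`, with density
`(2πσ²)^{-n/2} exp(-‖t‖²/(2σ²))` with respect to Lebesgue measure. -/
noncomputable def isoGaussian (n : ℕ) (σ : ℝ) : Measure (EuclideanSpace ℝ (Fin n)) :=
  volume.withDensity fun t =>
    ENNReal.ofReal ((2 * π * σ ^ 2) ^ (-(n : ℝ) / 2) * Real.exp (-‖t‖ ^ 2 / (2 * σ ^ 2)))

/-- The standard Gaussian CDF `Φ(a) = (1/√(2π)) ∫_{-∞}^a exp(-s²/2) ds`. -/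
noncomputable def stdGaussianCDF (a : ℝ) : ℝ :=
  (Real.sqrt (2 * π))⁻¹ * ∫ s in Set.Iic a, Real.exp (-s ^ 2 / 2)

/-- The inverse `Φ⁻¹ : (0,1) → ℝ` of the standard Gaussian CDF. -/
noncomputable def stdGaussianCDFInv : ℝ → ℝ :=
  Function.invFun stdGaussianCDF

open Set
open scoped ENNReal NNReal

lemma phi_eq : (fun s : ℝ => Real.exp (-s ^ 2 / 2)) = fun s => Real.exp (-(1/2 : ℝ) * s ^ 2) := by
  funext s; ring_nf

lemma integrable_phi : Integrable (fun s : ℝ => Real.exp (-s ^ 2 / 2)) := by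
  rw [phi_eq]; exact integrable_exp_neg_mul_sq (by norm_num)

lemma integral_phi : ∫ s : ℝ, Real.exp (-s ^ 2 / 2) = Real.sqrt (2 * π) := by
  rw [phi_eq, integral_gaussian]
  rw [show π / (1/2 : ℝ) = 2 * π by ring]

lemma sqrt_two_pi_pos : 0 < Real.sqrt (2 * π) :=
  Real.sqrt_pos.2 (by positivity)

lemma stdCDF_strictMono : StrictMono stdGaussianCDF := by
  intro a b hab
  unfold stdGaussianCDF
  have h1 : IntegrableOn (fun s : ℝ => Real.exp (-s ^ 2 / 2)) (Iic a) := integrable_phi.integrableOn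
  have h2 : IntegrableOn (fun s : ℝ => Real.exp (-s ^ 2 / 2)) (Iic b) := integrable_phi.integrableOn
  have key : (∫ s in Set.Iic b, Real.exp (-s ^ 2 / 2)) - (∫ s in Set.Iic a, Real.exp (-s ^ 2 / 2))
      = ∫ s in a..b, Real.exp (-s ^ 2 / 2) := by
    rw [intervalIntegral.integral_Iic_sub_Iic h1 h2]
  have hpos : 0 < ∫ s in a..b, Real.exp (-s ^ 2 / 2) := by
    apply intervalIntegral.intervalIntegral_pos_of_pos (f := fun s : ℝ => Real.exp (-s ^ 2 / 2))
    · exact integrable_phi.intervalIntegrable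
    · intro x; exact Real.exp_pos _
    · exact hab
  have := sqrt_two_pi_pos
  nlinarith [key, inv_pos.2 sqrt_two_pi_pos]

lemma stdCDF_continuous : Continuous stdGaussianCDF := by
  have key : ∀ a : ℝ, stdGaussianCDF a = (Real.sqrt (2 * π))⁻¹ *
      ((∫ s in Set.Iic (0:ℝ), Real.exp (-s ^ 2 / 2)) + ∫ s in (0:ℝ)..a, Real.exp (-s ^ 2 / 2)) := by
    intro a
    unfold stdGaussianCDF
    have hsub := intervalIntegral.integral_Iic_sub_Iic (μ := volume)
      (f := fun s : ℝ => Real.exp (-s ^ 2 / 2)) integrable_phi.integrableOn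
      integrable_phi.integrableOn (a := 0) (b := a)
    have : (∫ s in Set.Iic a, Real.exp (-s ^ 2 / 2))
        = (∫ s in Set.Iic (0:ℝ), Real.exp (-s ^ 2 / 2)) + ∫ s in (0:ℝ)..a, Real.exp (-s ^ 2 / 2) := by
      linarith
    rw [this]
  rw [funext key]
  exact continuous_const.mul (continuous_const.add
    (intervalIntegral.continuous_primitive (fun a b => integrable_phi.intervalIntegrable) 0))

lemma stdCDF_tendsto_atTop : Filter.Tendsto stdGaussianCDF Filter.atTop (nhds 1) := by
  have h : Filter.Tendsto (fun a : ℝ => ∫ s in Set.Iic a, Real.exp (-s ^ 2 / 2)) Filter.atTop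
      (nhds (∫ s : ℝ, Real.exp (-s ^ 2 / 2))) := by
    have := tendsto_setIntegral_of_monotone (μ := volume) (f := fun s : ℝ => Real.exp (-s ^ 2 / 2))
      (s := fun a : ℝ => Set.Iic a) (fun a => measurableSet_Iic) (fun a b hab => Iic_subset_Iic.2 hab)
      (by rw [Set.iUnion_Iic]; exact integrable_phi.integrableOn)
    rwa [Set.iUnion_Iic, setIntegral_univ] at this
  have : Filter.Tendsto stdGaussianCDF Filter.atTop
      (nhds ((Real.sqrt (2 * π))⁻¹ * ∫ s : ℝ, Real.exp (-s ^ 2 / 2))) :=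
    (tendsto_const_nhds.mul h)
  rwa [integral_phi, inv_mul_cancel₀ (ne_of_gt sqrt_two_pi_pos)] at this

lemma stdCDF_neg (a : ℝ) : stdGaussianCDF (-a) = 1 - stdGaussianCDF a := by
  unfold stdGaussianCDF
  have h1 : (∫ s in Set.Iic (-a), Real.exp (-s ^ 2 / 2))
      = ∫ s in Set.Ioi a, Real.exp (-s ^ 2 / 2) := by
    have := integral_comp_neg_Iic (-a) (fun s : ℝ => Real.exp (-s ^ 2 / 2))
    simp only [neg_sq, neg_neg] at this
    exact this
  have h2 := intervalIntegral.integral_Iic_add_Ioi (μ := volume) (b := a)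
    (f := fun s : ℝ => Real.exp (-s ^ 2 / 2))
    integrable_phi.integrableOn integrable_phi.integrableOn
  rw [h1]
  rw [integral_phi] at h2
  have : (∫ s in Set.Ioi a, Real.exp (-s ^ 2 / 2))
      = Real.sqrt (2 * π) - ∫ s in Set.Iic a, Real.exp (-s ^ 2 / 2) := by linarith
  rw [this]
  field_simp

lemma stdCDF_tendsto_atBot : Filter.Tendsto stdGaussianCDF Filter.atBot (nhds 0) := by
  have : Filter.Tendsto (fun a : ℝ => 1 - stdGaussianCDF a) Filter.atTop (nhds (1 - 1)) :=
    tendsto_const_nhds.sub stdCDF_tendsto_atTop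
  have h2 : Filter.Tendsto (fun a : ℝ => stdGaussianCDF (-a)) Filter.atTop (nhds 0) := by
    simpa [stdCDF_neg] using this
  have := h2.comp (Filter.tendsto_neg_atBot_atTop)
  have heq : ((fun a => stdGaussianCDF (-a)) ∘ Neg.neg) = stdGaussianCDF := by
    funext x; simp [Function.comp]
  rwa [heq] at this

lemma stdCDF_surj {p : ℝ} (hp : p ∈ Set.Ioo (0:ℝ) 1) : ∃ a, stdGaussianCDF a = p := by
  obtain ⟨a₀, ha₀⟩ : ∃ a₀, stdGaussianCDF a₀ < p := by
    have := stdCDF_tendsto_atBot.eventually_lt_const hp.1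
    exact this.exists
  obtain ⟨a₁, ha₁⟩ : ∃ a₁, p < stdGaussianCDF a₁ := by
    have := stdCDF_tendsto_atTop.eventually_const_lt hp.2
    exact this.exists
  have hle : a₀ ≤ a₁ := by
    by_contra h
    push_neg at h
    exact absurd (stdCDF_strictMono h) (by linarith)
  obtain ⟨a, _, ha⟩ := intermediate_value_Icc hle stdCDF_continuous.continuousOn
    ⟨le_of_lt ha₀, le_of_lt ha₁⟩
  exact ⟨a, ha⟩

lemma stdCDF_inv_eq {p : ℝ} (hp : p ∈ Set.Ioo (0:ℝ) 1) :
    stdGaussianCDF (stdGaussianCDFInv p) = p :=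
  Function.invFun_eq (stdCDF_surj hp)

lemma stdCDFInv_lt {p q : ℝ} (hp : p ∈ Set.Ioo (0:ℝ) 1) (hq : q ∈ Set.Ioo (0:ℝ) 1)
    (h : p < q) : stdGaussianCDFInv p < stdGaussianCDFInv q := by
  rcases lt_trichotomy (stdGaussianCDFInv p) (stdGaussianCDFInv q) with h' | h' | h'
  · exact h'
  · rw [← stdCDF_inv_eq hp, ← stdCDF_inv_eq hq, h'] at h; exact absurd h (lt_irrefl _)
  · have := stdCDF_strictMono h'
    rw [stdCDF_inv_eq hp, stdCDF_inv_eq hq] at this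
    linarith

noncomputable def gden (σ : ℝ) (s : ℝ) : ℝ :=
  (2 * π * σ ^ 2) ^ (-(1:ℝ) / 2) * Real.exp (-s ^ 2 / (2 * σ ^ 2))

lemma gden_pos {σ : ℝ} (hσ : 0 < σ) (s : ℝ) : 0 < gden σ s := by
  unfold gden
  have : (0:ℝ) < 2 * π * σ ^ 2 := by positivity
  positivity

lemma gden_cont (σ : ℝ) : Continuous (gden σ) := by
  unfold gden
  exact continuous_const.mul (Real.continuous_exp.comp (by fun_prop))

lemma gden_eq (σ : ℝ) : gden σ = fun s =>
    (2 * π * σ ^ 2) ^ (-(1:ℝ) / 2) * Real.exp (-(1 / (2 * σ ^ 2)) * s ^ 2) := by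
  funext s; unfold gden; ring_nf

lemma integrable_gden {σ : ℝ} (hσ : 0 < σ) : Integrable (gden σ) := by
  rw [gden_eq]
  exact (integrable_exp_neg_mul_sq (by positivity)).const_mul _

lemma coef_eq {σ : ℝ} (hσ : 0 < σ) :
    (2 * π * σ ^ 2) ^ (-(1:ℝ) / 2) = (Real.sqrt (2 * π))⁻¹ * σ⁻¹ := by
  have h2π : (0:ℝ) < 2 * π := by positivity
  have hσ2 : (0:ℝ) < σ ^ 2 := by positivity
  rw [Real.mul_rpow h2π.le hσ2.le]
  congr 1
  · rw [Real.sqrt_eq_rpow, ← Real.rpow_neg h2π.le]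
    norm_num
  · rw [← Real.rpow_natCast σ 2, ← Real.rpow_mul hσ.le]
    norm_num
    rw [Real.rpow_neg_one]

lemma integral_gden {σ : ℝ} (hσ : 0 < σ) : ∫ s : ℝ, gden σ s = 1 := by
  rw [gden_eq]
  rw [MeasureTheory.integral_const_mul, integral_gaussian]
  rw [coef_eq hσ]
  rw [show π / (1 / (2 * σ ^ 2)) = (2 * π) * σ ^ 2 by field_simp]
  rw [Real.sqrt_mul (by positivity : (0:ℝ) ≤ 2 * π) (σ ^ 2), Real.sqrt_sq hσ.le]
  field_simp

lemma integral_gden_Iic {σ : ℝ} (hσ : 0 < σ) (a : ℝ) :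
    ∫ s in Set.Iic a, gden σ s = stdGaussianCDF (a / σ) := by
  have key := MeasureTheory.Measure.setIntegral_comp_smul_of_pos (volume) (gden σ)
    (Set.Iic (a / σ)) hσ
  rw [LinearOrderedField.smul_Iic hσ] at key
  simp only [smul_eq_mul] at key
  rw [mul_div_cancel₀ _ hσ.ne'] at key
  have hgs : ∀ x : ℝ, gden σ (σ * x) = (2 * π * σ ^ 2) ^ (-(1:ℝ) / 2) * Real.exp (-x ^ 2 / 2) := by
    intro x
    unfold gden
    congr 2
    rw [mul_pow]
    field_simp
  simp_rw [hgs] at key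
  rw [MeasureTheory.integral_const_mul] at key
  have hfin : (Module.finrank ℝ ℝ) = 1 := Module.finrank_self ℝ
  rw [hfin, pow_one] at key
  have : (∫ s in Set.Iic a, gden σ s) = σ * ((2 * π * σ ^ 2) ^ (-(1:ℝ) / 2) *
      ∫ x in Set.Iic (a / σ), Real.exp (-x ^ 2 / 2)) := by
    rw [key]; field_simp
  rw [this, coef_eq hσ]
  unfold stdGaussianCDF
  field_simp

open RealInnerProductSpace in
noncomputable def wden (n : ℕ) (σ : ℝ) (t : EuclideanSpace ℝ (Fin n)) : ℝ :=
  (2 * π * σ ^ 2) ^ (-(n : ℝ) / 2) * Real.exp (-‖t‖ ^ 2 / (2 * σ ^ 2))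

lemma wden_pos {n : ℕ} {σ : ℝ} (hσ : 0 < σ) (t : EuclideanSpace ℝ (Fin n)) : 0 < wden n σ t := by
  unfold wden
  have : (0:ℝ) < 2 * π * σ ^ 2 := by positivity
  positivity

lemma wden_cont (n : ℕ) (σ : ℝ) : Continuous (wden n σ) := by
  unfold wden
  fun_prop

lemma wden_prod {n : ℕ} {σ : ℝ} (hσ : 0 < σ) (y : EuclideanSpace ℝ (Fin n)) :
    wden n σ y = ∏ i, gden σ (y i) := by
  unfold wden gden
  have h2π : (0:ℝ) < 2 * π * σ ^ 2 := by positivity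
  have hnorm : ‖y‖ ^ 2 = ∑ i, (y i) ^ 2 := by
    rw [EuclideanSpace.norm_eq, Real.sq_sqrt (by positivity)]
    simp [sq_abs]
  rw [Finset.prod_mul_distrib, Finset.prod_const, ← Real.exp_sum]
  congr 1
  · rw [show (Finset.univ : Finset (Fin n)).card = n by simp]
    rw [← Real.rpow_natCast ((2 * π * σ ^ 2) ^ (-(1:ℝ)/2)) n, ← Real.rpow_mul h2π.le]
    congr 1
    ring
  · congr 1
    rw [hnorm]
    rw [show (∑ i : Fin n, -(y i) ^ 2 / (2 * σ ^ 2)) = (∑ i : Fin n, -(y i) ^ 2) / (2 * σ ^ 2) from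
      (Finset.sum_div _ _ _).symm, ← Finset.sum_neg_distrib]

lemma integral_wden {n : ℕ} {σ : ℝ} (hσ : 0 < σ) :
    ∫ t : EuclideanSpace ℝ (Fin n), wden n σ t = 1 := by
  have mp := (EuclideanSpace.volume_preserving_symm_measurableEquiv_toLp (Fin n)).symm
  rw [← mp.integral_comp']
  have : ∀ y : Fin n → ℝ,
      wden n σ ((MeasurableEquiv.toLp 2 (Fin n → ℝ)).symm.symm y) = ∏ i, gden σ (y i) := by
    intro y
    rw [wden_prod hσ]
    rfl
  rw [funext this, MeasureTheory.integral_fintype_prod_volume_eq_prod (f := fun _ => gden σ)]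
  simp [integral_gden hσ]

lemma integrable_wden {n : ℕ} {σ : ℝ} (hσ : 0 < σ) :
    Integrable (wden n σ) := by
  have mp := (EuclideanSpace.volume_preserving_symm_measurableEquiv_toLp (Fin n)).symm
  rw [← mp.integrable_comp_emb (MeasurableEquiv.measurableEmbedding _)]
  have : (wden n σ) ∘ ((MeasurableEquiv.toLp 2 (Fin n → ℝ)).symm.symm)
      = fun y : Fin n → ℝ => ∏ i, gden σ (y i) := by
    funext y
    simp only [Function.comp]
    rw [wden_prod hσ]
    rfl
  rw [this]
  exact Integrable.fintype_prod (fun i => integrable_gden hσ)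

open RealInnerProductSpace in
lemma halfspace_integral {n : ℕ} {σ : ℝ} (hσ : 0 < σ) {u : EuclideanSpace ℝ (Fin n)}
    (hu : ‖u‖ = 1) (a : ℝ) :
    ∫ t in {s : EuclideanSpace ℝ (Fin n) | ⟪u, s⟫ ≤ a}, wden n σ t
      = stdGaussianCDF (a / σ) := by
  have hn : 0 < n := by
    rcases Nat.eq_zero_or_pos n with h | h
    · subst h
      have : u = 0 := Subsingleton.elim u 0
      rw [this, norm_zero] at hu
      norm_num at hu
    · exact h
  set i₀ : Fin n := ⟨0, hn⟩
  have hon : Orthonormal ℝ (Set.restrict {i₀} (fun _ : Fin n => u)) := by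
    constructor
    · intro i; exact hu
    · intro i j hij; exact absurd (Subsingleton.elim i j) hij
  obtain ⟨b, hb⟩ := Orthonormal.exists_orthonormalBasis_extension_of_card_eq
    (by simp) hon
  have hbu : b i₀ = u := hb i₀ (Set.mem_singleton _)
  -- transport via b.repr.symm
  have mp := b.measurePreserving_repr_symm
  have hset : (⇑(b.repr.symm)) ⁻¹' {s : EuclideanSpace ℝ (Fin n) | ⟪u, s⟫ ≤ a}
      = {y : EuclideanSpace ℝ (Fin n) | y i₀ ≤ a} := by
    ext y
    simp only [Set.mem_preimage, Set.mem_setOf_eq]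
    have : ⟪u, b.repr.symm y⟫ = y i₀ := by
      rw [← hbu, ← b.repr.inner_map_map (b i₀) (b.repr.symm y),
        LinearIsometryEquiv.apply_symm_apply, b.repr_self]
      rw [EuclideanSpace.inner_single_left]
      simp
    rw [this]
  have key := mp.setIntegral_preimage_emb
    (b.repr.symm.toHomeomorph.measurableEmbedding)
    (wden n σ) {s : EuclideanSpace ℝ (Fin n) | ⟪u, s⟫ ≤ a}
  rw [hset] at key
  have hwd : ∀ y, wden n σ (b.repr.symm y) = wden n σ y := by
    intro y
    unfold wden
    rw [LinearIsometryEquiv.norm_map]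
  rw [← key]
  rw [show (fun y => wden n σ (b.repr.symm y)) = wden n σ from funext hwd]
  -- move to Pi
  have mp2 := (EuclideanSpace.volume_preserving_symm_measurableEquiv_toLp (Fin n)).symm
  have key2 := mp2.setIntegral_preimage_emb (MeasurableEquiv.measurableEmbedding _)
    (wden n σ) {y : EuclideanSpace ℝ (Fin n) | y i₀ ≤ a}
  have hset2 : (⇑(MeasurableEquiv.toLp 2 (Fin n → ℝ)).symm.symm) ⁻¹'
      {y : EuclideanSpace ℝ (Fin n) | y i₀ ≤ a} = {y : Fin n → ℝ | y i₀ ≤ a} := rfl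
  rw [hset2] at key2
  rw [← key2]
  have hmeas : MeasurableSet {y : Fin n → ℝ | y i₀ ≤ a} :=
    measurableSet_le (measurable_pi_apply i₀) measurable_const
  rw [← MeasureTheory.integral_indicator hmeas]
  have hident : ∀ y : Fin n → ℝ,
      Set.indicator {y : Fin n → ℝ | y i₀ ≤ a}
        (fun y => wden n σ ((MeasurableEquiv.toLp 2 (Fin n → ℝ)).symm.symm y)) y
      = ∏ i, Function.update (fun _ : Fin n => gden σ) i₀ ((Set.Iic a).indicator (gden σ)) i (y i) := by
    intro y
    have hw : wden n σ ((MeasurableEquiv.toLp 2 (Fin n → ℝ)).symm.symm y) = ∏ i, gden σ (y i) := by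
      rw [wden_prod hσ]; rfl
    by_cases h : y ∈ {y : Fin n → ℝ | y i₀ ≤ a}
    · rw [Set.indicator_of_mem h, hw]
      refine Finset.prod_congr rfl fun i _ => ?_
      rcases eq_or_ne i i₀ with rfl | hi
      · rw [Function.update_self]
        rw [Set.indicator_of_mem (show y i₀ ∈ Set.Iic a from h)]
      · rw [Function.update_of_ne hi]
    · rw [Set.indicator_of_notMem h]
      symm
      apply Finset.prod_eq_zero (Finset.mem_univ i₀)
      rw [Function.update_self]
      rw [Set.indicator_of_notMem (show y i₀ ∉ Set.Iic a from h)]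
  rw [funext hident, MeasureTheory.integral_fintype_prod_volume_eq_prod]
  rw [Finset.prod_eq_single i₀
    (fun j _ hj => by rw [Function.update_of_ne hj]; exact integral_gden hσ)
    (fun h => absurd (Finset.mem_univ i₀) h)]
  rw [Function.update_self, MeasureTheory.integral_indicator measurableSet_Iic,
    integral_gden_Iic hσ]

open RealInnerProductSpace in
lemma smoothing_lb {n : ℕ} {σ : ℝ} (hσ : 0 < σ) {f : EuclideanSpace ℝ (Fin n) → ℝ}
    (hf : Measurable f) (hf01 : ∀ t, f t ∈ Set.Icc (0:ℝ) 1)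
    (x δ : EuclideanSpace ℝ (Fin n)) {p : ℝ} (hp : p ∈ Set.Ioo (0:ℝ) 1)
    (hpx : ∫ t, wden n σ t * f (x + t) = p) :
    stdGaussianCDF (stdGaussianCDFInv p - ‖δ‖ / σ) ≤ ∫ t, wden n σ t * f (x + δ + t) := by
  set β := stdGaussianCDFInv p with hβ
  rcases eq_or_ne δ 0 with rfl | hδ
  · simp only [norm_zero, zero_div, sub_zero, add_zero]
    rw [hpx, stdCDF_inv_eq hp]
  set d : ℝ := ‖δ‖ with hdd
  have hd : 0 < d := norm_pos_iff.2 hδ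
  set u : EuclideanSpace ℝ (Fin n) := d⁻¹ • δ with hu_def
  have hu : ‖u‖ = 1 := by
    rw [hu_def, norm_smul, norm_inv, norm_norm, ← hdd, inv_mul_cancel₀ hd.ne']
  have hinner_us : ∀ s, ⟪δ, s⟫ = d * ⟪u, s⟫ := by
    intro s
    rw [hu_def, real_inner_smul_left]
    field_simp
  have hud : ⟪u, δ⟫ = d := by
    rw [hu_def, real_inner_smul_left, real_inner_self_eq_norm_sq, ← hdd]
    field_simp
  set S : Set (EuclideanSpace ℝ (Fin n)) := {s | ⟪u, s⟫ ≤ σ * β} with hS_def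
  have hSmeas : MeasurableSet S :=
    measurableSet_le (continuous_const.inner continuous_id).measurable measurable_const
  set c : ℝ := Real.exp ((2 * d * (σ * β) - d ^ 2) / (2 * σ ^ 2)) with hc_def
  set F : EuclideanSpace ℝ (Fin n) → ℝ := fun s => f (x + s) with hF_def
  set G : EuclideanSpace ℝ (Fin n) → ℝ := Set.indicator S (fun _ => (1:ℝ)) with hG_def
  set W : EuclideanSpace ℝ (Fin n) → ℝ := wden n σ with hW_def
  set W' : EuclideanSpace ℝ (Fin n) → ℝ := fun s => wden n σ (s - δ) with hW'_def
  -- sign comparison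
  have hwc : ∀ s, W' s - c * W s = (2 * π * σ ^ 2) ^ (-(n:ℝ)/2) *
      (Real.exp (-‖s - δ‖ ^ 2 / (2 * σ ^ 2)) -
        Real.exp ((2 * d * (σ * β) - d ^ 2) / (2 * σ ^ 2) + -‖s‖ ^ 2 / (2 * σ ^ 2))) := by
    intro s
    rw [hW'_def, hW_def, hc_def]
    unfold wden
    rw [Real.exp_add]
    ring
  have hAB : ∀ s, (-‖s - δ‖ ^ 2 / (2 * σ ^ 2)) -
      ((2 * d * (σ * β) - d ^ 2) / (2 * σ ^ 2) + -‖s‖ ^ 2 / (2 * σ ^ 2))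
      = d * (⟪u, s⟫ - σ * β) / σ ^ 2 := by
    intro s
    rw [@norm_sub_sq_real _ _ _ s δ,
      show (⟪s, δ⟫ : ℝ) = d * ⟪u, s⟫ from by rw [real_inner_comm]; exact hinner_us s, ← hdd]
    field_simp
    ring
  have hCpos : (0:ℝ) < (2 * π * σ ^ 2) ^ (-(n:ℝ)/2) := by
    have : (0:ℝ) < 2 * π * σ ^ 2 := by positivity
    positivity
  have hsign : ∀ s, 0 ≤ (F s - G s) * (W' s - c * W s) := by
    intro s
    by_cases hs : s ∈ S
    · have ha : F s - G s ≤ 0 := by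
        rw [hG_def, Set.indicator_of_mem hs]
        have := (hf01 (x + s)).2
        rw [hF_def]; simpa using this
      have hb : W' s - c * W s ≤ 0 := by
        rw [hwc s]
        apply mul_nonpos_of_nonneg_of_nonpos hCpos.le
        rw [sub_nonpos, Real.exp_le_exp, ← sub_nonpos, hAB s]
        have hus : ⟪u, s⟫ ≤ σ * β := hs
        have : d * (⟪u, s⟫ - σ * β) ≤ 0 :=
          mul_nonpos_of_nonneg_of_nonpos hd.le (by linarith)
        exact div_nonpos_of_nonpos_of_nonneg this (by positivity)
      nlinarith [ha, hb]
    · apply mul_nonneg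
      · rw [hG_def, Set.indicator_of_notMem hs]
        have := (hf01 (x + s)).1
        rw [hF_def]; linarith
      · rw [hwc s]
        apply mul_nonneg hCpos.le
        rw [sub_nonneg, Real.exp_le_exp, ← sub_nonneg, hAB s]
        have hus : σ * β < ⟪u, s⟫ := lt_of_not_ge hs
        have : 0 ≤ d * (⟪u, s⟫ - σ * β) := mul_nonneg hd.le (by linarith)
        positivity
  -- integrability
  have hFmeas : Measurable F := hf.comp (measurable_const_add x)
  have hFbdd : ∀ s, ‖F s‖ ≤ 1 := by
    intro s
    rw [Real.norm_eq_abs, abs_le]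
    exact ⟨by linarith [(hf01 (x + s)).1], (hf01 (x + s)).2⟩
  have hGmeas : Measurable G := measurable_const.indicator hSmeas
  have hGbdd : ∀ s, ‖G s‖ ≤ 1 := by
    intro s
    rw [hG_def, Real.norm_eq_abs, abs_le]
    by_cases hs : s ∈ S
    · rw [Set.indicator_of_mem hs]; norm_num
    · rw [Set.indicator_of_notMem hs]; norm_num
  have hW : Integrable W := integrable_wden hσ
  have hW' : Integrable W' := by
    have := (integrable_wden (n := n) hσ).comp_sub_right δ
    exact this
  have int1 : Integrable (fun s => F s * W' s) :=
    hW'.bdd_mul hFmeas.aestronglyMeasurable (Filter.Eventually.of_forall hFbdd)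
  have int2 : Integrable (fun s => G s * W' s) :=
    hW'.bdd_mul hGmeas.aestronglyMeasurable (Filter.Eventually.of_forall hGbdd)
  have int3 : Integrable (fun s => F s * W s) :=
    hW.bdd_mul hFmeas.aestronglyMeasurable (Filter.Eventually.of_forall hFbdd)
  have int4 : Integrable (fun s => G s * W s) :=
    hW.bdd_mul hGmeas.aestronglyMeasurable (Filter.Eventually.of_forall hGbdd)
  -- expansion
  have h0 : 0 ≤ ∫ s, (F s - G s) * (W' s - c * W s) := integral_nonneg hsign
  have hexp : (fun s => (F s - G s) * (W' s - c * W s))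
      = fun s => (F s * W' s - G s * W' s) - (c * (F s * W s) - c * (G s * W s)) := by
    funext s; ring
  rw [hexp] at h0
  have eA : ∫ s, (F s * W' s - G s * W' s) = (∫ s, F s * W' s) - ∫ s, G s * W' s :=
    MeasureTheory.integral_sub int1 int2
  have eB : ∫ s, (c * (F s * W s) - c * (G s * W s))
      = c * (∫ s, F s * W s) - c * (∫ s, G s * W s) := by
    rw [MeasureTheory.integral_sub (int3.const_mul c) (int4.const_mul c),
      MeasureTheory.integral_const_mul, MeasureTheory.integral_const_mul]
  have eC : ∫ s, ((F s * W' s - G s * W' s) - (c * (F s * W s) - c * (G s * W s)))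
      = (∫ s, (F s * W' s - G s * W' s)) - ∫ s, (c * (F s * W s) - c * (G s * W s)) :=
    MeasureTheory.integral_sub (int1.sub int2) ((int3.const_mul c).sub (int4.const_mul c))
  rw [eC, eA, eB] at h0
  -- compute the three known integrals
  have hFW : ∫ s, F s * W s = p := by
    rw [← hpx]
    exact integral_congr_ae (Filter.Eventually.of_forall fun s => mul_comm _ _)
  have hGW : ∫ s, G s * W s = p := by
    have : (fun s => G s * W s) = Set.indicator S W := by
      funext s
      by_cases hs : s ∈ S
      · rw [hG_def, hW_def, Set.indicator_of_mem hs, Set.indicator_of_mem hs, one_mul]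
      · rw [hG_def, hW_def, Set.indicator_of_notMem hs, Set.indicator_of_notMem hs, zero_mul]
    rw [this, MeasureTheory.integral_indicator hSmeas, hW_def,
      halfspace_integral hσ hu (σ * β), mul_div_cancel_left₀ β hσ.ne', stdCDF_inv_eq hp]
  have hGW' : ∫ s, G s * W' s = stdGaussianCDF (β - d / σ) := by
    set S' : Set (EuclideanSpace ℝ (Fin n)) := {s | ⟪u, s⟫ ≤ σ * β - d} with hS'_def
    have hS'meas : MeasurableSet S' :=
      measurableSet_le (continuous_const.inner continuous_id).measurable measurable_const
    have hmem : ∀ s : EuclideanSpace ℝ (Fin n), (s + δ ∈ S) ↔ (s ∈ S') := by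
      intro s
      simp only [hS_def, hS'_def, Set.mem_setOf_eq, inner_add_right, hud]
      constructor <;> intro h <;> linarith
    have heq' : ∀ s, G (s + δ) * W' (s + δ) = Set.indicator S' (wden n σ) s := by
      intro s
      have hWs : W' (s + δ) = wden n σ s := by
        rw [hW'_def]
        simp only [add_sub_cancel_right]
      rw [hWs, hG_def]
      by_cases hs : s ∈ S'
      · rw [Set.indicator_of_mem ((hmem s).mpr hs), Set.indicator_of_mem hs, one_mul]
      · rw [Set.indicator_of_notMem (fun h => hs ((hmem s).mp h)),
          Set.indicator_of_notMem hs, zero_mul]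
    have htr : ∫ s, Set.indicator S' (wden n σ) s = ∫ s, G s * W' s := by
      have h2 := MeasureTheory.integral_add_right_eq_self (μ := volume)
        (fun s => G s * W' s) δ
      calc ∫ s, Set.indicator S' (wden n σ) s
          = ∫ s, G (s + δ) * W' (s + δ) :=
            integral_congr_ae (Filter.Eventually.of_forall fun s => (heq' s).symm)
        _ = ∫ s, G s * W' s := h2
    rw [← htr, MeasureTheory.integral_indicator hS'meas,
      halfspace_integral hσ hu (σ * β - d)]
    congr 1
    field_simp
  rw [hFW, hGW, hGW'] at h0
  -- final translation
  have heq2 : ∀ t, F (t + δ) * W' (t + δ) = wden n σ t * f (x + δ + t) := by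
    intro t
    rw [hF_def, hW'_def]
    simp only [add_sub_cancel_right]
    rw [mul_comm]
    congr 2
    rw [add_comm t δ, ← add_assoc]
  have htr2 : ∫ t, wden n σ t * f (x + δ + t) = ∫ s, F s * W' s := by
    have h2 := MeasureTheory.integral_add_right_eq_self (μ := volume)
      (fun s => F s * W' s) δ
    calc ∫ t, wden n σ t * f (x + δ + t)
        = ∫ t, F (t + δ) * W' (t + δ) :=
          integral_congr_ae (Filter.Eventually.of_forall fun t => (heq2 t).symm)
      _ = ∫ s, F s * W' s := h2
  rw [htr2]
  linarith

lemma iso_integral {n : ℕ} {σ : ℝ} (hσ : 0 < σ) (h : EuclideanSpace ℝ (Fin n) → ℝ) :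
    ∫ t, h t ∂(isoGaussian n σ) = ∫ t, wden n σ t * h t := by
  unfold isoGaussian
  have hmeas : Measurable fun t : EuclideanSpace ℝ (Fin n) => (wden n σ t).toNNReal :=
    (wden_cont n σ).measurable.real_toNNReal
  have key := integral_withDensity_eq_integral_smul (μ := volume) hmeas h
  have hd : (fun t : EuclideanSpace ℝ (Fin n) =>
      ENNReal.ofReal ((2 * π * σ ^ 2) ^ (-(n : ℝ) / 2) * Real.exp (-‖t‖ ^ 2 / (2 * σ ^ 2))))
      = fun t => ((wden n σ t).toNNReal : ℝ≥0∞) := rfl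
  rw [hd, key]
  congr 1
  funext t
  rw [NNReal.smul_def, Real.coe_toNNReal _ (wden_pos hσ t).le, smul_eq_mul]

lemma integrable_wf {n : ℕ} {σ : ℝ} (hσ : 0 < σ) {f : EuclideanSpace ℝ (Fin n) → ℝ}
    (hf : Measurable f) (hf01 : ∀ t, f t ∈ Set.Icc (0:ℝ) 1) (z : EuclideanSpace ℝ (Fin n)) :
    Integrable (fun t => wden n σ t * f (z + t)) := by
  have h := (integrable_wden (n := n) hσ).bdd_mul (c := 1)
    ((hf.comp (measurable_const_add z)).aestronglyMeasurable)
    (Filter.Eventually.of_forall fun s => by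
      simp only [Function.comp_apply]
      rw [Real.norm_eq_abs, abs_le]
      exact ⟨by linarith [(hf01 (z + s)).1], (hf01 (z + s)).2⟩)
  exact h.congr (Filter.Eventually.of_forall fun s => mul_comm _ _)

lemma smoothing_ub {n : ℕ} {σ : ℝ} (hσ : 0 < σ) {f : EuclideanSpace ℝ (Fin n) → ℝ}
    (hf : Measurable f) (hf01 : ∀ t, f t ∈ Set.Icc (0:ℝ) 1)
    (x δ : EuclideanSpace ℝ (Fin n)) {p : ℝ} (hp : p ∈ Set.Ioo (0:ℝ) 1)
    (hpx : ∫ t, wden n σ t * f (x + t) = p) :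
    ∫ t, wden n σ t * f (x + δ + t) ≤ stdGaussianCDF (stdGaussianCDFInv p + ‖δ‖ / σ) := by
  have h1f01 : ∀ t, (1 - f t) ∈ Set.Icc (0:ℝ) 1 := by
    intro t
    exact ⟨by linarith [(hf01 t).2], by linarith [(hf01 t).1]⟩
  have h1fmeas : Measurable (fun t => 1 - f t) := measurable_const.sub hf
  have hcompl : ∀ z : EuclideanSpace ℝ (Fin n),
      ∫ t, wden n σ t * (1 - f (z + t)) = 1 - ∫ t, wden n σ t * f (z + t) := by
    intro z
    have heq : (fun t => wden n σ t * (1 - f (z + t)))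
        = fun t => wden n σ t - wden n σ t * f (z + t) := by
      funext t; ring
    rw [heq, MeasureTheory.integral_sub (integrable_wden hσ) (integrable_wf hσ hf hf01 z),
      integral_wden hσ]
  have hpx' : ∫ t, wden n σ t * (1 - f (x + t)) = 1 - p := by
    rw [hcompl x, hpx]
  have h1p : (1 - p) ∈ Set.Ioo (0:ℝ) 1 := ⟨by linarith [hp.2], by linarith [hp.1]⟩
  have key := smoothing_lb hσ h1fmeas h1f01 x δ h1p hpx'
  rw [hcompl (x + δ)] at key
  have hInvNeg : stdGaussianCDFInv (1 - p) = - stdGaussianCDFInv p := by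
    apply stdCDF_strictMono.injective
    rw [stdCDF_inv_eq h1p, stdCDF_neg, stdCDF_inv_eq hp]
  rw [hInvNeg] at key
  have hneg := stdCDF_neg (stdGaussianCDFInv p + ‖δ‖ / σ)
  rw [show -(stdGaussianCDFInv p + ‖δ‖ / σ) = -stdGaussianCDFInv p - ‖δ‖ / σ by ring] at hneg
  linarith


/-- robustness guarantee of Cohen et al.: with `σ > 0`, measurable
`f_A, f_B : ℝⁿ → [0,1]` whose σ-smoothed transforms take values in `(0,1)`,
`p_A = f̂_A(x)`, `p_B = f̂_B(x)`, `p_B ≤ p_A`: every `δ` with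
`‖δ‖₂ < (σ/2)(Φ⁻¹(p_A) - Φ⁻¹(p_B))` satisfies `f̂_A(x+δ) > f̂_B(x+δ)`;
equivalently, any `δ` with `f̂_A(x+δ) ≤ f̂_B(x+δ)` satisfies
`‖δ‖₂ ≥ (σ/2)(Φ⁻¹(p_A) - Φ⁻¹(p_B))`. -/
theorem cohen_robustness_guarantee (n : ℕ) (σ : ℝ) (hσ : 0 < σ)
    (fA fB : EuclideanSpace ℝ (Fin n) → ℝ)
    (hfA : Measurable fA) (hfB : Measurable fB)
    (hfA01 : ∀ t, fA t ∈ Set.Icc (0 : ℝ) 1) (hfB01 : ∀ t, fB t ∈ Set.Icc (0 : ℝ) 1)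
    (fhatA fhatB : EuclideanSpace ℝ (Fin n) → ℝ)
    (hfhatA : ∀ x, fhatA x = ∫ t, fA (x + t) ∂(isoGaussian n σ))
    (hfhatB : ∀ x, fhatB x = ∫ t, fB (x + t) ∂(isoGaussian n σ))
    (hA01 : ∀ x, fhatA x ∈ Set.Ioo (0 : ℝ) 1)
    (hB01 : ∀ x, fhatB x ∈ Set.Ioo (0 : ℝ) 1)
    (x : EuclideanSpace ℝ (Fin n)) (pA pB : ℝ)
    (hpA : pA = fhatA x) (hpB : pB = fhatB x) (hle : pB ≤ pA) :
    (∀ δ : EuclideanSpace ℝ (Fin n),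
      ‖δ‖ < (σ / 2) * (stdGaussianCDFInv pA - stdGaussianCDFInv pB) →
      fhatB (x + δ) < fhatA (x + δ)) ∧
    (∀ δ : EuclideanSpace ℝ (Fin n),
      fhatA (x + δ) ≤ fhatB (x + δ) →
      ‖δ‖ ≥ (σ / 2) * (stdGaussianCDFInv pA - stdGaussianCDFInv pB)) := by
  have hAeq : ∀ y, fhatA y = ∫ t, wden n σ t * fA (y + t) := by
    intro y; rw [hfhatA y, iso_integral hσ]
  have hBeq : ∀ y, fhatB y = ∫ t, wden n σ t * fB (y + t) := by
    intro y; rw [hfhatB y, iso_integral hσ]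
  have hpA01 : pA ∈ Set.Ioo (0:ℝ) 1 := hpA ▸ hA01 x
  have hpB01 : pB ∈ Set.Ioo (0:ℝ) 1 := hpB ▸ hB01 x
  have hpxA : ∫ t, wden n σ t * fA (x + t) = pA := by rw [← hAeq x, hpA]
  have hpxB : ∫ t, wden n σ t * fB (x + t) = pB := by rw [← hBeq x, hpB]
  set βA := stdGaussianCDFInv pA with hβA
  set βB := stdGaussianCDFInv pB with hβB
  have main : ∀ δ : EuclideanSpace ℝ (Fin n),
      ‖δ‖ < (σ / 2) * (βA - βB) → fhatB (x + δ) < fhatA (x + δ) := by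
    intro δ hδ
    have lbA := smoothing_lb hσ hfA hfA01 x δ hpA01 hpxA
    have ubB := smoothing_ub hσ hfB hfB01 x δ hpB01 hpxB
    rw [← hAeq (x + δ)] at lbA
    rw [← hBeq (x + δ)] at ubB
    have hdiv : ‖δ‖ / σ < (βA - βB) / 2 := by
      rw [div_lt_div_iff₀ hσ (by norm_num : (0:ℝ) < 2)]
      nlinarith [hδ]
    have hlt : βB + ‖δ‖ / σ < βA - ‖δ‖ / σ := by linarith
    calc fhatB (x + δ) ≤ stdGaussianCDF (βB + ‖δ‖ / σ) := ubB
      _ < stdGaussianCDF (βA - ‖δ‖ / σ) := stdCDF_strictMono hlt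
      _ ≤ fhatA (x + δ) := lbA
  refine ⟨main, fun δ hδ => ?_⟩
  by_contra h
  push_neg at h
  exact absurd (main δ h) (not_lt.2 hδ)
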